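/- arXiv:2311.14238 — 2 statements merged into one kernel-verified Lean document; each statement's English description precedes it below -/
import Mathlib

section
/- Let A be a unital commutative C*-algebra C(X) for a compact Hausdorff space X. Then A has real rank zero (the invertible self-adjoint elements are dense in the self-adjoint part) if and only if X is totally disconnected (covering dimension zero). -/
open Set Metric

/-- In a compact Hausdorff totally disconnected space, a closed set inside an open set
is contained in a clopen set inside the open set. -/
lemma aux_clopen_between {X : Type*} [TopologicalSpace X] [CompactSpace X] [T2Space X]
    [TotallyDisconnectedSpace X] {Z U : Set X} (hZ : IsClosed Z) (hU : IsOpen U) (hZU : Z ⊆ U) :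
    ∃ V : Set X, IsClopen V ∧ Z ⊆ V ∧ V ⊆ U := by
  choose W hW hxW hWU using fun x : Z => compact_exists_isClopen_in_isOpen hU (hZU x.2)
  have hZc : IsCompact Z := hZ.isCompact
  obtain ⟨t, ht⟩ := hZc.elim_finite_subcover (fun x : Z => W x) (fun x => (hW x).2)
    (fun x hx => mem_iUnion.2 ⟨⟨x, hx⟩, hxW ⟨x, hx⟩⟩)
  refine ⟨⋃ x ∈ t, W x, ?_, ht, iUnion₂_subset fun x _ => hWU x⟩
  exact isClopen_biUnion_finset (fun x _ => hW x)

theorem stmt_0 (X : Type*) [TopologicalSpace X] [CompactSpace X] [T2Space X] :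
    Dense {f : C(X, ℝ) | ∀ x : X, f x ≠ 0} ↔ TotallyDisconnectedSpace X := by
  constructor
  · intro hD
    by_contra hX
    -- get a preconnected set with two distinct points
    rw [totallyDisconnectedSpace_iff_connectedComponent_singleton] at hX
    push_neg at hX
    obtain ⟨x, hx⟩ := hX
    have hxmem : x ∈ connectedComponent x := mem_connectedComponent
    obtain ⟨y, hy, hyx⟩ : ∃ y ∈ connectedComponent x, y ≠ x := by
      by_contra h
      push_neg at h
      exact hx (Subset.antisymm (fun z hz => h z hz) (by simpa using hxmem))
    -- Urysohn function: 0 at x, 1 at y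
    obtain ⟨u, hux, huy, -⟩ := exists_continuous_zero_one_of_isClosed
      (isClosed_singleton (x := x)) (isClosed_singleton (x := y))
      (disjoint_singleton.2 (Ne.symm hyx))
    set F : C(X, ℝ) := (2 : ℝ) • u - (ContinuousMap.const X 1) with hF
    have hFx : F x = -1 := by
      simp [hF, hux (mem_singleton x)]
    have hFy : F y = 1 := by
      simp [hF, huy (mem_singleton y)]
      norm_num
    obtain ⟨g, hg, hgball⟩ := hD.exists_mem_open isOpen_ball
      ⟨F, mem_ball_self one_pos⟩
    have hdist : dist g F < 1 := mem_ball.1 hgball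
    have hgx : g x < 0 := by
      have := (ContinuousMap.dist_apply_le_dist x).trans_lt hdist
      rw [Real.dist_eq, hFx] at this
      have := (abs_lt.1 this).2
      linarith
    have hgy : 0 < g y := by
      have := (ContinuousMap.dist_apply_le_dist y).trans_lt hdist
      rw [Real.dist_eq, hFy] at this
      have := (abs_lt.1 this).1
      linarith
    have hiv : Set.Icc (g x) (g y) ⊆ g '' connectedComponent x :=
      isPreconnected_connectedComponent.intermediate_value hxmem hy
        (g.continuous.continuousOn)
    obtain ⟨z, -, hz⟩ := hiv ⟨hgx.le, hgy.le⟩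
    exact hg z hz
  · intro hX
    rw [Metric.dense_iff]
    intro f ε hε
    classical
    -- the zero set of f
    set Z : Set X := f ⁻¹' {0} with hZdef
    have hZcl : IsClosed Z := isClosed_singleton.preimage f.continuous
    set U : Set X := {x | |f x| < ε / 2} with hUdef
    have hUo : IsOpen U := by
      have : Continuous fun x => |f x| := f.continuous.abs
      exact isOpen_lt this continuous_const
    have hZU : Z ⊆ U := by
      intro x hx
      simp only [hZdef, mem_preimage, mem_singleton_iff] at hx
      simp [hUdef, hx, half_pos hε]
    obtain ⟨V, hV, hZV, hVU⟩ := aux_clopen_between hZcl hUo hZU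
    set g : C(X, ℝ) := ⟨fun x => if x ∈ V then f x + ε / 2 else f x, by
      refine Continuous.if ?_ (f.continuous.add continuous_const) f.continuous
      intro a ha
      have : frontier {x | x ∈ V} = (∅ : Set X) := by
        simpa [Set.setOf_mem_eq] using hV.frontier_eq
      rw [this] at ha
      exact absurd ha (notMem_empty a)⟩ with hgdef
    refine ⟨g, Metric.mem_ball.2 ?_, ?_⟩
    · rw [ContinuousMap.dist_lt_iff hε]
      intro x
      simp only [hgdef, ContinuousMap.coe_mk]
      split_ifs with hx
      · simp only [Real.dist_eq, add_sub_cancel_left]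
        rw [abs_of_pos (half_pos hε)]
        linarith
      · simpa using hε
    · intro x
      simp only [hgdef, ContinuousMap.coe_mk]
      split_ifs with hx
      · have : |f x| < ε / 2 := hVU hx
        have h2 := abs_lt.1 this
        have : 0 < f x + ε / 2 := by linarith [h2.1]
        exact ne_of_gt this
      · intro h
        exact hx (hZV (by simp [hZdef, h]))
end

section
/- Let A be a C*-algebra with a faithful tracial state τ, let a, b be positive elements of A, and suppose a ≲ b (Cuntz subequivalent). Then d_τ(a) ≤ d_τ(b), where d_τ(x) = lim_{ε→0} τ(f_ε(x)). -/
/-- Cuntz subequivalence. -/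
def CuntzSub' {A : Type*} [CStarAlgebra A] (a b : A) : Prop :=
  ∃ x : ℕ → A,
    Filter.Tendsto (fun n => star (x n) * x n) Filter.atTop (nhds a) ∧
      ∀ n, x n * star (x n) ∈ closure {z : A | ∃ y : A, z = b * y * b}

section AuxLemmas

open Filter Polynomial

set_option linter.unusedSectionVars false

variable {A : Type*} [CStarAlgebra A] [Nontrivial A] [PartialOrder A] [StarOrderedRing A]

lemma aux_tau_mono (τ : A →L[ℂ] ℂ)
    (hpos : ∀ x : A, ∃ r : ℝ, 0 ≤ r ∧ τ (star x * x) = (r : ℂ))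
    {x y : A} (hxy : x ≤ y) : (τ x).re ≤ (τ y).re := by
  have h0 : 0 ≤ y - x := sub_nonneg.mpr hxy
  obtain ⟨r, hr, hτ⟩ := hpos (CFC.sqrt (y - x))
  have hsa : star (CFC.sqrt (y - x)) = CFC.sqrt (y - x) :=
    (IsSelfAdjoint.of_nonneg (CFC.sqrt_nonneg (a := y - x))).star_eq
  rw [hsa, CFC.sqrt_mul_sqrt_self _ h0, map_sub] at hτ
  have := congrArg Complex.re hτ
  simp only [Complex.sub_re, Complex.ofReal_re] at this
  linarith

/-- poly approx with zero constant term -/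
lemma aux_poly_near (f : ℝ → ℝ) (hf : Continuous f) (hf0 : f 0 = 0) (R : ℝ) (hR : 0 < R)
    {ε : ℝ} (hε : 0 < ε) :
    ∃ p : ℝ[X], p.eval 0 = 0 ∧ ∀ x ∈ Set.Icc (-R) R, |p.eval x - f x| < ε := by
  obtain ⟨q, hq⟩ := exists_polynomial_near_of_continuousOn (-R) R f hf.continuousOn (ε/2)
    (by linarith)
  refine ⟨q - C (q.eval 0), by simp, fun x hx => ?_⟩
  have h0 : |q.eval 0 - f 0| < ε/2 := hq 0 ⟨by linarith, le_of_lt hR⟩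
  rw [hf0, sub_zero] at h0
  have hx' := hq x hx
  simp only [eval_sub, eval_C]
  calc |q.eval x - q.eval 0 - f x| = |(q.eval x - f x) + (-(q.eval 0))| := by ring_nf
    _ ≤ |q.eval x - f x| + |(-(q.eval 0))| := abs_add_le _ _
    _ < ε/2 + ε/2 := by rw [abs_neg]; exact add_lt_add hx' h0
    _ = ε := by ring

lemma aux_spectrum_subset {c : A} (hc : IsSelfAdjoint c) {R : ℝ} (hR : ‖c‖ ≤ R) :
    spectrum ℝ c ⊆ Set.Icc (-R) R := by
  intro x hx
  have := spectrum.norm_le_norm_of_mem hx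
  rw [Real.norm_eq_abs] at this
  constructor <;> [linarith [neg_abs_le x]; linarith [le_abs_self x]]

lemma aux_cfc_near_aeval {c : A} (hc : IsSelfAdjoint c) (f : ℝ → ℝ) (hf : Continuous f)
    (p : ℝ[X]) {ε : ℝ} (hε : 0 ≤ ε) (h : ∀ x ∈ spectrum ℝ c, |p.eval x - f x| ≤ ε) :
    ‖cfc f c - aeval c p‖ ≤ ε := by
  rw [← cfc_polynomial (R := ℝ) (p := IsSelfAdjoint) p c hc, ← cfc_sub f p.eval c hf.continuousOn p.continuous.continuousOn]
  exact norm_cfc_le hε fun x hx => by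
    rw [Real.norm_eq_abs, abs_sub_comm]; exact h x hx

lemma aux_tendsto_cfc {c : ℕ → A} {a : A} (hc : ∀ k, IsSelfAdjoint (c k))
    (ha : IsSelfAdjoint a) (hlim : Tendsto c atTop (nhds a)) {f : ℝ → ℝ} (hf : Continuous f) :
    Tendsto (fun k => cfc f (c k)) atTop (nhds (cfc f a)) := by
  rw [Metric.tendsto_atTop]
  intro ε hε
  set R : ℝ := ‖a‖ + 1 with hR
  have hR0 : 0 < R := by positivity
  obtain ⟨p, hp⟩ := exists_polynomial_near_of_continuousOn (-R) R f hf.continuousOn (ε/4)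
    (by linarith)
  have haR : ‖a‖ ≤ R := by simp [hR]
  have h1 : ∀ᶠ k in atTop, ‖c k - a‖ < 1 := by
    have := Metric.tendsto_atTop.mp hlim 1 one_pos
    obtain ⟨N, hN⟩ := this
    exact eventually_atTop.mpr ⟨N, fun k hk => by
      simpa [dist_eq_norm] using hN k hk⟩
  have h2 : Tendsto (fun k => aeval (c k) p) atTop (nhds (aeval a p)) :=
    (p.continuous_aeval.tendsto a).comp hlim
  have h3 : ∀ᶠ k in atTop, ‖aeval (c k) p - aeval a p‖ < ε/4 := by
    have := Metric.tendsto_atTop.mp h2 (ε/4) (by linarith)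
    obtain ⟨N, hN⟩ := this
    exact eventually_atTop.mpr ⟨N, fun k hk => by simpa [dist_eq_norm] using hN k hk⟩
  have key : ∀ᶠ k in atTop, dist (cfc f (c k)) (cfc f a) < ε := by
    filter_upwards [h1, h3] with k hk1 hk3
    have hckR : ‖c k‖ ≤ R := by
      calc ‖c k‖ = ‖(c k - a) + a‖ := by rw [sub_add_cancel]
        _ ≤ ‖c k - a‖ + ‖a‖ := norm_add_le _ _
        _ ≤ 1 + ‖a‖ := by linarith
        _ = R := by rw [hR]; ring
    have e1 : ‖cfc f (c k) - aeval (c k) p‖ ≤ ε/4 := by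
      refine aux_cfc_near_aeval (hc k) f hf p (by linarith) fun x hx => ?_
      exact le_of_lt (hp x (aux_spectrum_subset (hc k) hckR hx))
    have e2 : ‖cfc f a - aeval a p‖ ≤ ε/4 := by
      refine aux_cfc_near_aeval ha f hf p (by linarith) fun x hx => ?_
      exact le_of_lt (hp x (aux_spectrum_subset ha haR hx))
    rw [dist_eq_norm]
    calc ‖cfc f (c k) - cfc f a‖
        = ‖(cfc f (c k) - aeval (c k) p) + (aeval (c k) p - aeval a p)
            + (aeval a p - cfc f a)‖ := by congr 1; abel
      _ ≤ ‖(cfc f (c k) - aeval (c k) p) + (aeval (c k) p - aeval a p)‖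
            + ‖aeval a p - cfc f a‖ := norm_add_le _ _
      _ ≤ ‖cfc f (c k) - aeval (c k) p‖ + ‖aeval (c k) p - aeval a p‖
            + ‖aeval a p - cfc f a‖ := by gcongr; exact norm_add_le _ _
      _ ≤ ε/4 + ε/4 + ε/4 := by
          rw [norm_sub_rev (aeval a p)]
          gcongr
      _ < ε := by linarith
  obtain ⟨N, hN⟩ := eventually_atTop.mp key
  exact ⟨N, hN⟩

lemma aux_mul_pow (u v : A) (m : ℕ) : (u*v)^(m+1) = u * ((v*u)^m * v) := by
  induction m with
  | zero => simp
  | succ m ih => rw [pow_succ, ih]; simp [pow_succ, mul_assoc]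

lemma aux_tau_pow (τ : A →L[ℂ] ℂ) (htr : ∀ x y : A, τ (x * y) = τ (y * x))
    (u v : A) (m : ℕ) : τ ((u*v)^(m+1)) = τ ((v*u)^(m+1)) := by
  rw [aux_mul_pow, htr, pow_succ]
  rw [mul_assoc]

lemma aux_tau_aeval (τ : A →L[ℂ] ℂ) (htr : ∀ x y : A, τ (x * y) = τ (y * x))
    (u v : A) (p : ℝ[X]) (hp0 : p.eval 0 = 0) :
    τ (aeval (u*v) p) = τ (aeval (v*u) p) := by
  rw [aeval_eq_sum_range (R := ℝ) (u*v), aeval_eq_sum_range (R := ℝ) (v*u), map_sum, map_sum]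
  refine Finset.sum_congr rfl fun i hi => ?_
  rw [τ.map_smul_of_tower, τ.map_smul_of_tower]
  cases i with
  | zero => rw [Polynomial.coeff_zero_eq_eval_zero, hp0]; simp
  | succ m => rw [aux_tau_pow τ htr u v m]

lemma aux_tau_cfc (τ : A →L[ℂ] ℂ) (htr : ∀ x y : A, τ (x * y) = τ (y * x))
    (x : A) {f : ℝ → ℝ} (hf : Continuous f) (hf0 : f 0 = 0) :
    τ (cfc f (star x * x)) = τ (cfc f (x * star x)) := by
  set c := star x * x
  set c' := x * star x
  have hc : IsSelfAdjoint c := IsSelfAdjoint.of_nonneg (star_mul_self_nonneg x)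
  have hc' : IsSelfAdjoint c' := IsSelfAdjoint.of_nonneg (mul_star_self_nonneg x)
  set R : ℝ := max ‖c‖ ‖c'‖ + 1 with hRdef
  have hR0 : 0 < R := by positivity
  have hcR : ‖c‖ ≤ R := by
    have := le_max_left ‖c‖ ‖c'‖; linarith
  have hc'R : ‖c'‖ ≤ R := by
    have := le_max_right ‖c‖ ‖c'‖; linarith
  rw [← sub_eq_zero, ← norm_le_zero_iff]
  refine le_of_forall_pos_le_add fun ε hε => ?_
  set δ : ℝ := ε / (2 * (‖τ‖ + 1)) with hδdef
  have hτ0 : (0:ℝ) ≤ ‖τ‖ := norm_nonneg _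
  have hδ0 : 0 < δ := by positivity
  obtain ⟨p, hp0, hp⟩ := aux_poly_near f hf hf0 R hR0 hδ0
  have e1 : ‖cfc f c - aeval c p‖ ≤ δ := by
    refine aux_cfc_near_aeval hc f hf p hδ0.le fun t ht => ?_
    exact (hp t (aux_spectrum_subset hc hcR ht)).le
  have e2 : ‖cfc f c' - aeval c' p‖ ≤ δ := by
    refine aux_cfc_near_aeval hc' f hf p hδ0.le fun t ht => ?_
    exact (hp t (aux_spectrum_subset hc' hc'R ht)).le
  have e3 : τ (aeval c p) = τ (aeval c' p) := aux_tau_aeval τ htr (star x) x p hp0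
  have key : τ (cfc f c) - τ (cfc f c')
      = τ (cfc f c - aeval c p) - τ (cfc f c' - aeval c' p) := by
    rw [map_sub, map_sub, e3]; ring
  rw [key]
  calc ‖τ (cfc f c - aeval c p) - τ (cfc f c' - aeval c' p)‖
      ≤ ‖τ (cfc f c - aeval c p)‖ + ‖τ (cfc f c' - aeval c' p)‖ := norm_sub_le _ _
    _ ≤ ‖τ‖ * δ + ‖τ‖ * δ := by
        gcongr
        · exact (τ.le_opNorm _).trans (by gcongr)
        · exact (τ.le_opNorm _).trans (by gcongr)
    _ ≤ ε := by
        rw [hδdef]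
        rw [div_eq_inv_mul]
        have h2 : 0 < 2 * (‖τ‖ + 1) := by positivity
        have : ‖τ‖ * ((2 * (‖τ‖ + 1))⁻¹ * ε) + ‖τ‖ * ((2 * (‖τ‖ + 1))⁻¹ * ε)
            = (2 * ‖τ‖) * ((2 * (‖τ‖ + 1))⁻¹ * ε) := by ring
        rw [this]
        have hle : (2 * ‖τ‖) * (2 * (‖τ‖ + 1))⁻¹ ≤ 1 := by
          have h3 : 2 * ‖τ‖ ≤ 2 * (‖τ‖ + 1) := by linarith
          calc (2 * ‖τ‖) * (2 * (‖τ‖ + 1))⁻¹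
              ≤ (2 * (‖τ‖ + 1)) * (2 * (‖τ‖ + 1))⁻¹ := by gcongr
            _ = 1 := mul_inv_cancel₀ h2.ne'
        calc (2 * ‖τ‖) * ((2 * (‖τ‖ + 1))⁻¹ * ε)
            = ((2 * ‖τ‖) * (2 * (‖τ‖ + 1))⁻¹) * ε := by ring
          _ ≤ 1 * ε := by gcongr
          _ = ε := one_mul ε
    _ ≤ 0 + ε := by linarith

def auxT (b : A) : NonUnitalSubalgebra ℝ A where
  carrier := {z : A | ∃ y : A, z = b * y * b}
  add_mem' := by rintro x y ⟨u, rfl⟩ ⟨v, rfl⟩; exact ⟨u + v, by noncomm_ring⟩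
  zero_mem' := ⟨0, by simp⟩
  mul_mem' := by rintro x y ⟨u, rfl⟩ ⟨v, rfl⟩; exact ⟨u * (b * b) * v, by noncomm_ring⟩
  smul_mem' := by rintro r x ⟨u, rfl⟩; exact ⟨r • u, by simp [mul_smul_comm, smul_mul_assoc]⟩

lemma aux_pow_mem {S : NonUnitalSubalgebra ℝ A} {c : A} (hc : c ∈ S) (m : ℕ) :
    c ^ (m + 1) ∈ S := by
  induction m with
  | zero => simpa using hc
  | succ m ih => rw [pow_succ]; exact mul_mem ih hc

lemma aux_aeval_mem {S : NonUnitalSubalgebra ℝ A} {c : A} (hc : c ∈ S) (p : ℝ[X])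
    (hp0 : p.eval 0 = 0) : aeval c p ∈ S := by
  rw [aeval_eq_sum_range (R := ℝ) c]
  refine sum_mem fun i hi => ?_
  cases i with
  | zero => rw [Polynomial.coeff_zero_eq_eval_zero, hp0]; simpa using zero_mem S
  | succ m => exact SMulMemClass.smul_mem _ (aux_pow_mem hc m)

lemma aux_cfc_mem {b c : A} (hc : 0 ≤ c)
    (hmem : c ∈ closure {z : A | ∃ y : A, z = b * y * b})
    {f : ℝ → ℝ} (hf : Continuous f) (hf0 : f 0 = 0) :
    cfc f c ∈ closure {z : A | ∃ y : A, z = b * y * b} := by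
  set S := (auxT b).topologicalClosure with hS
  have hSset : (S : Set A) = closure {z : A | ∃ y : A, z = b * y * b} := rfl
  have hcS : c ∈ S := hmem
  have hsa : IsSelfAdjoint c := IsSelfAdjoint.of_nonneg hc
  rw [← hSset]
  have hclosed : IsClosed (S : Set A) := isClosed_closure
  rw [← hclosed.closure_eq]
  rw [Metric.mem_closure_iff]
  intro ε hε
  obtain ⟨p, hp0, hp⟩ := aux_poly_near f hf hf0 (‖c‖ + 1) (by positivity) (half_pos hε)
  refine ⟨aeval c p, aux_aeval_mem hcS p hp0, ?_⟩
  rw [dist_eq_norm]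
  have := aux_cfc_near_aeval hsa f hf p (half_pos hε).le fun t ht => by
    have := hp t (aux_spectrum_subset hsa (by linarith [norm_nonneg c]) ht)
    · exact this.le
  linarith [this, half_lt_self hε]

noncomputable def auxF (ε : ℝ) : ℝ → ℝ := fun t => min 1 (max 0 ((2 * t - ε) / ε))

lemma auxF_continuous (ε : ℝ) : Continuous (auxF ε) := by
  unfold auxF; fun_prop

lemma auxF_nonneg (ε t : ℝ) : 0 ≤ auxF ε t :=
  le_min one_pos.le (le_max_left _ _)

lemma auxF_le_one (ε t : ℝ) : auxF ε t ≤ 1 := min_le_left _ _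

lemma auxF_zero {ε : ℝ} (hε : 0 < ε) : auxF ε 0 = 0 := by
  unfold auxF
  rw [mul_zero, zero_sub, neg_div, div_self hε.ne']
  norm_num

lemma auxF_sq_le (ε t : ℝ) : auxF ε t * auxF ε t ≤ auxF ε t := by
  calc auxF ε t * auxF ε t ≤ 1 * auxF ε t :=
        mul_le_mul_of_nonneg_right (auxF_le_one ε t) (auxF_nonneg ε t)
    _ = auxF ε t := one_mul _

lemma auxF_one_of_ge {ε t : ℝ} (hε : 0 < ε) (ht : ε ≤ t) : auxF ε t = 1 := by
  unfold auxF
  rw [min_eq_left]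
  refine le_max_of_le_right ?_
  rw [le_div_iff₀ hε]
  linarith

lemma auxF_mul_near {ε t : ℝ} (hε : 0 < ε) (ht : 0 ≤ t) : |auxF ε t * t - t| ≤ ε := by
  rcases le_or_gt ε t with h | h
  · rw [auxF_one_of_ge hε h]; simpa using hε.le
  · have h0 := auxF_nonneg ε t
    have h1 := auxF_le_one ε t
    rw [abs_le]
    constructor <;> nlinarith

lemma aux_gb_near (b : A) (hb : 0 ≤ b) {ε : ℝ} (hε : 0 < ε) :
    ‖cfc (auxF ε) b * b - b‖ ≤ ε := by
  have hbsa : IsSelfAdjoint b := .of_nonneg hb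
  have h1 : cfc (auxF ε) b * b = cfc (fun t => auxF ε t * t) b := by
    rw [cfc_mul (auxF ε) (fun t : ℝ => t) b (auxF_continuous ε).continuousOn
      (continuous_id.continuousOn), cfc_id' ℝ b hbsa]
  have h2 : cfc (fun t => auxF ε t * t - t) b = cfc (auxF ε) b * b - b := by
    rw [cfc_sub (fun t => auxF ε t * t) (fun t : ℝ => t) b
      ((auxF_continuous ε).mul continuous_id).continuousOn continuous_id.continuousOn,
      cfc_id' ℝ b hbsa, ← h1]
  rw [← h2]
  refine norm_cfc_le hε.le fun t ht => ?_
  have ht0 : 0 ≤ t := spectrum_nonneg_of_nonneg hb ht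
  rw [Real.norm_eq_abs]
  exact auxF_mul_near hε ht0

lemma aux_her (τ : A →L[ℂ] ℂ) (hτ1 : τ 1 = 1)
    (hpos : ∀ x : A, ∃ r : ℝ, 0 ≤ r ∧ τ (star x * x) = (r : ℂ))
    {b e : A} (hb : 0 ≤ b) (he0 : 0 ≤ e) (he1 : e ≤ 1)
    (heS : e ∈ closure {z : A | ∃ y : A, z = b * y * b}) :
    (τ e).re ≤ ⨆ m : ℕ, (τ (cfc (auxF (1 / 2 ^ m)) b)).re := by
  set g : ℕ → A := fun m => cfc (auxF (1 / 2 ^ m)) b with hg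
  have hbsa : IsSelfAdjoint b := .of_nonneg hb
  have hεm : ∀ m : ℕ, (0:ℝ) < 1 / 2 ^ m := fun m => by positivity
  have hg0 : ∀ m, 0 ≤ g m := fun m => cfc_nonneg fun t _ => auxF_nonneg _ t
  have hgsa : ∀ m, IsSelfAdjoint (g m) := fun m => .of_nonneg (hg0 m)
  have hg1 : ∀ m, g m ≤ 1 := fun m => cfc_le_one _ _ fun t _ => auxF_le_one _ t
  have hgnorm : ∀ m, ‖g m‖ ≤ 1 := fun m => norm_cfc_le one_pos.le fun t _ => by
    rw [Real.norm_eq_abs, abs_of_nonneg (auxF_nonneg _ t)]; exact auxF_le_one _ t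
  have hbdd : BddAbove (Set.range fun m : ℕ => (τ (g m)).re) := by
    refine ⟨1, ?_⟩; rintro r ⟨m, rfl⟩
    have := aux_tau_mono τ hpos (hg1 m)
    rwa [hτ1, Complex.one_re] at this
  have key : ∀ m, (τ (g m * e * g m)).re ≤ ⨆ k : ℕ, (τ (g k)).re := by
    intro m
    have h1 : g m * e * g m ≤ g m * g m := by
      have := star_left_conjugate_le_conjugate he1 (g m)
      rwa [(hgsa m).star_eq, mul_one] at this
    have h2 : g m * g m ≤ g m := by
      rw [hg]
      rw [← cfc_mul (auxF (1/2^m)) (auxF (1/2^m)) b (auxF_continuous _).continuousOn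
        (auxF_continuous _).continuousOn]
      exact cfc_mono (fun t _ => auxF_sq_le _ t)
        ((auxF_continuous _).mul (auxF_continuous _)).continuousOn
        (auxF_continuous _).continuousOn
    exact le_trans (aux_tau_mono τ hpos (h1.trans h2)) (le_ciSup hbdd m)
  have htend : Tendsto (fun m => g m * e * g m) atTop (nhds e) := by
    rw [Metric.tendsto_atTop]
    intro ε hεp
    obtain ⟨z, hzT, hdist⟩ := Metric.mem_closure_iff.mp heS (ε/4) (by linarith)
    obtain ⟨y, rfl⟩ := hzT
    have hδ : ∀ m, ‖g m * b - b‖ ≤ 1/2^m := fun m => aux_gb_near b hb (hεm m)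
    have hδ' : ∀ m, ‖b * g m - b‖ ≤ 1/2^m := fun m => by
      have hst : b * g m - b = star (g m * b - b) := by
        rw [star_sub, star_mul, (hgsa m).star_eq, hbsa.star_eq]
      rw [hst, norm_star]; exact hδ m
    set C : ℝ := 2 * (‖b‖ * ‖y‖) + 1 with hC
    have hC0 : 0 < C := by positivity
    have hlim : Tendsto (fun m : ℕ => (1/2^m : ℝ) * C) atTop (nhds 0) := by
      have h12 : Tendsto (fun m : ℕ => ((1:ℝ)/2)^m) atTop (nhds 0) :=
        tendsto_pow_atTop_nhds_zero_of_lt_one (by norm_num) (by norm_num)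
      have := h12.mul_const C
      rw [zero_mul] at this
      simpa [div_pow] using this
    have hev : ∀ᶠ m : ℕ in atTop, (1/2^m : ℝ) * C < ε/4 := by
      have : (0:ℝ) < ε/4 := by linarith
      exact hlim.eventually (eventually_lt_nhds this)
    obtain ⟨N, hN⟩ := eventually_atTop.mp hev
    refine ⟨N, fun m hm => ?_⟩
    have hNm := hN m hm
    -- decompose
    have hid : g m * e * g m - e
        = g m * ((e - b * y * b) * g m)
          + ((g m * b - b) * (y * (b * g m)) + b * (y * (b * g m - b)))
          + (b * y * b - e) := by noncomm_ring
    have hgb : ‖b * g m‖ ≤ ‖b‖ := by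
      calc ‖b * g m‖ ≤ ‖b‖ * ‖g m‖ := norm_mul_le _ _
        _ ≤ ‖b‖ * 1 := by gcongr; exact hgnorm m
        _ = ‖b‖ := mul_one _
    have hez : ‖e - b * y * b‖ < ε/4 := by rw [← dist_eq_norm]; exact hdist
    have t1 : ‖g m * ((e - b * y * b) * g m)‖ ≤ ‖e - b * y * b‖ := by
      calc ‖g m * ((e - b * y * b) * g m)‖ ≤ ‖g m‖ * (‖e - b * y * b‖ * ‖g m‖) :=
            (norm_mul_le _ _).trans (by gcongr; exact norm_mul_le _ _)
        _ ≤ 1 * (‖e - b * y * b‖ * 1) := by gcongr <;> [exact hgnorm m; exact hgnorm m]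
        _ = ‖e - b * y * b‖ := by ring
    have t2 : ‖(g m * b - b) * (y * (b * g m)) + b * (y * (b * g m - b))‖ ≤ (1/2^m) * C := by
      calc ‖(g m * b - b) * (y * (b * g m)) + b * (y * (b * g m - b))‖
          ≤ ‖(g m * b - b) * (y * (b * g m))‖ + ‖b * (y * (b * g m - b))‖ := norm_add_le _ _
        _ ≤ ‖g m * b - b‖ * (‖y‖ * ‖b * g m‖) + ‖b‖ * (‖y‖ * ‖b * g m - b‖) := by
            gcongr
            · exact (norm_mul_le _ _).trans (by gcongr; exact norm_mul_le _ _)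
            · exact (norm_mul_le _ _).trans (by gcongr; exact norm_mul_le _ _)
        _ ≤ (1/2^m) * (‖y‖ * ‖b‖) + ‖b‖ * (‖y‖ * (1/2^m)) := by
            gcongr <;> first
            | exact hδ m
            | exact hδ' m
            | exact hgb
        _ ≤ (1/2^m) * C := by
            rw [hC]
            have := (hεm m).le
            nlinarith [norm_nonneg b, norm_nonneg y]
    rw [dist_eq_norm, hid]
    calc ‖g m * ((e - b * y * b) * g m)
          + ((g m * b - b) * (y * (b * g m)) + b * (y * (b * g m - b)))
          + (b * y * b - e)‖
        ≤ ‖g m * ((e - b * y * b) * g m)‖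
          + ‖(g m * b - b) * (y * (b * g m)) + b * (y * (b * g m - b))‖
          + ‖b * y * b - e‖ := norm_add₃_le
      _ < ε/4 + (ε/4) + (ε/4) := by
          refine add_lt_add (add_lt_add_of_lt_of_le (lt_of_le_of_lt t1 hez) (t2.trans hNm.le)) ?_
          · rw [norm_sub_rev]; exact hez
      _ < ε := by linarith
  have htend2 : Tendsto (fun m => (τ (g m * e * g m)).re) atTop (nhds ((τ e).re)) :=
    (Complex.continuous_re.tendsto _).comp ((τ.continuous.tendsto _).comp htend)
  exact le_of_tendsto htend2 (Eventually.of_forall key)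


end AuxLemmas

open Filter

theorem stmt_13 (A : Type*) [CStarAlgebra A] [PartialOrder A] [StarOrderedRing A]
    (τ : A →L[ℂ] ℂ) (hτ1 : τ 1 = 1)
    (hpos : ∀ x : A, ∃ r : ℝ, 0 ≤ r ∧ τ (star x * x) = (r : ℂ))
    (htr : ∀ x y : A, τ (x * y) = τ (y * x))
    (hfaith : ∀ x : A, τ (star x * x) = 0 → x = 0)
    (a b : A) (ha : 0 ≤ a) (hb : 0 ≤ b) (hab : CuntzSub' a b) :
    let d : A → ℝ := fun x => ⨆ n : ℕ,
      (τ (cfc (fun t : ℝ =>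
        min 1 (max 0 ((2 * t - 1 / 2 ^ n) / (1 / 2 ^ n)))) x)).re
    d a ≤ d b := by
  intro d
  have hd : d = fun x : A => ⨆ n : ℕ, (τ (cfc (auxF (1 / 2 ^ n)) x)).re := rfl
  obtain ⟨x, hxlim, hxmem⟩ := hab
  rcases subsingleton_or_nontrivial A with hA | hA
  · exact le_of_eq (congrArg d (Subsingleton.elim a b))
  · rw [hd]
    refine ciSup_le fun n => ?_
    have hεn : (0:ℝ) < 1 / 2 ^ n := by positivity
    set f := auxF (1 / 2 ^ n) with hfdef
    have hf : Continuous f := auxF_continuous _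
    have hf0 : f 0 = 0 := auxF_zero hεn
    have hcsa : ∀ k, IsSelfAdjoint (star (x k) * x k) :=
      fun k => .of_nonneg (star_mul_self_nonneg _)
    have hasa : IsSelfAdjoint a := .of_nonneg ha
    have htendcfc := aux_tendsto_cfc hcsa hasa hxlim hf
    have htre : Tendsto (fun k => (τ (cfc f (star (x k) * x k))).re) atTop
        (nhds ((τ (cfc f a)).re)) :=
      (Complex.continuous_re.tendsto _).comp ((τ.continuous.tendsto _).comp htendcfc)
    refine le_of_tendsto htre (Eventually.of_forall fun k => ?_)
    rw [aux_tau_cfc τ htr (x k) hf hf0]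
    have he0 : 0 ≤ cfc f (x k * star (x k)) := cfc_nonneg fun t _ => auxF_nonneg _ t
    have he1 : cfc f (x k * star (x k)) ≤ 1 := cfc_le_one _ _ fun t _ => auxF_le_one _ t
    have hmem : cfc f (x k * star (x k)) ∈ closure {z : A | ∃ y : A, z = b * y * b} :=
      aux_cfc_mem (mul_star_self_nonneg (x k)) (hxmem k) hf hf0
    exact aux_her τ hτ1 hpos hb he0 he1 hmem
end
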